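/- Conversely, if (R, L) is a unital ring with an R^op-R-bimodule L carrying an additive involution l ↦ l̄ with overline(r^op l r') = r'^op l̄ r, and Λ is any R^•-invariant additive subgroup of L with Λ_min ≤ Λ ≤ Λ_max, then (R, L, L/Λ) is an even quadratic ring with φ the quotient map and tr(l + Λ) = l + l̄. -/

import Mathlib

/-- A quadratic ring `(R, L, A)`: `R` a unital ring, `L` an `Rᵒᵖ`-`R`-bimodule with
involution `bar`, `A` a right `R^•`-monoid-module, with maps `φ : L → A`, `tr : A → L`.
`lsmul r l` denotes `rᵒᵖ * l` (the left `Rᵒᵖ`-action) and `rsmul l r` denotes `l * r`. -/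
structure QuadraticRing (R L A : Type*) [Ring R] [AddCommGroup L] [AddCommGroup A] where
  lsmul : R → L → L
  rsmul : L → R → L
  lsmul_add : ∀ r l l', lsmul r (l + l') = lsmul r l + lsmul r l'
  add_lsmul : ∀ r r' l, lsmul (r + r') l = lsmul r l + lsmul r' l
  mul_lsmul : ∀ r r' l, lsmul (r * r') l = lsmul r' (lsmul r l)
  one_lsmul : ∀ l, lsmul 1 l = l
  rsmul_add : ∀ l l' r, rsmul (l + l') r = rsmul l r + rsmul l' r
  rsmul_add_right : ∀ l r r', rsmul l (r + r') = rsmul l r + rsmul l r'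
  rsmul_mul : ∀ l r r', rsmul l (r * r') = rsmul (rsmul l r) r'
  rsmul_one : ∀ l, rsmul l 1 = l
  lsmul_rsmul : ∀ r l r', lsmul r (rsmul l r') = rsmul (lsmul r l) r'
  bar : L → L
  bar_add : ∀ l l', bar (l + l') = bar l + bar l'
  bar_bar : ∀ l, bar (bar l) = l
  bar_smul : ∀ r l r', bar (lsmul r (rsmul l r')) = lsmul r' (rsmul (bar l) r)
  act : A → R → A
  act_one : ∀ a, act a 1 = a
  act_mul : ∀ a r r', act (act a r) r' = act a (r * r')
  phi : L → A
  phi_add : ∀ l l', phi (l + l') = phi l + phi l'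
  tr : A → L
  tr_add : ∀ a a', tr (a + a') = tr a + tr a'
  phi_conj : ∀ r l, phi (lsmul r (rsmul l r)) = act (phi l) r
  tr_act : ∀ a r, tr (act a r) = lsmul r (rsmul (tr a) r)
  tr_phi : ∀ l, tr (phi l) = l + bar l
  bar_tr : ∀ a, bar (tr a) = tr a
  phi_bar : ∀ l, phi (bar l) = phi l
  act_add : ∀ a r r', act a (r + r') = act a r + phi (lsmul r (rsmul (tr a) r')) + act a r'

/-- If `L` is an `Rᵒᵖ`-`R`-bimodule with involution and `Λ` is an
`R^•`-invariant additive subgroup with `Λ_min ≤ Λ ≤ Λ_max`, then `(R, L, L/Λ)` is an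
even quadratic ring with `φ` the quotient map and `tr(l + Λ) = l + l̄`. -/
theorem stmt_2 {R L : Type*} [Ring R] [AddCommGroup L]
    (lsmul : R → L → L) (rsmul : L → R → L) (bar : L → L)
    (lsmul_add : ∀ r l l', lsmul r (l + l') = lsmul r l + lsmul r l')
    (add_lsmul : ∀ r r' l, lsmul (r + r') l = lsmul r l + lsmul r' l)
    (mul_lsmul : ∀ r r' l, lsmul (r * r') l = lsmul r' (lsmul r l))
    (one_lsmul : ∀ l, lsmul 1 l = l)
    (rsmul_add : ∀ l l' r, rsmul (l + l') r = rsmul l r + rsmul l' r)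
    (rsmul_add_right : ∀ l r r', rsmul l (r + r') = rsmul l r + rsmul l r')
    (rsmul_mul : ∀ l r r', rsmul l (r * r') = rsmul (rsmul l r) r')
    (rsmul_one : ∀ l, rsmul l 1 = l)
    (lsmul_rsmul : ∀ r l r', lsmul r (rsmul l r') = rsmul (lsmul r l) r')
    (bar_add : ∀ l l', bar (l + l') = bar l + bar l')
    (bar_bar : ∀ l, bar (bar l) = l)
    (bar_smul : ∀ r l r', bar (lsmul r (rsmul l r')) = lsmul r' (rsmul (bar l) r))
    (Λ : AddSubgroup L)
    (hinv : ∀ l ∈ Λ, ∀ r, lsmul r (rsmul l r) ∈ Λ)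
    (hmin : ∀ l, l - bar l ∈ Λ)
    (hmax : ∀ l ∈ Λ, l + bar l = 0) :
    ∃ Q : QuadraticRing R L (L ⧸ Λ),
      Q.lsmul = lsmul ∧ Q.rsmul = rsmul ∧ Q.bar = bar ∧
      Q.phi = (QuotientAddGroup.mk : L → L ⧸ Λ) ∧
      (∀ l, Q.tr (QuotientAddGroup.mk l) = l + bar l) ∧
      Function.Surjective Q.phi := by
  classical
  have bar_zero : bar 0 = 0 := by
    have := bar_add 0 0
    simpa using this.symm
  set trHom : L →+ L := AddMonoidHom.mk' (fun l => l + bar l)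
    (fun l l' => by rw [bar_add]; abel) with htrHom
  have htrker : ∀ l ∈ Λ, trHom l = 0 := fun l hl => hmax l hl
  set trQ : L ⧸ Λ →+ L := QuotientAddGroup.lift Λ trHom htrker with htrQ
  have actHom_ker : ∀ r : R, ∀ l ∈ Λ,
      (QuotientAddGroup.mk (lsmul r (rsmul l r)) : L ⧸ Λ) = 0 := by
    intro r l hl
    exact (QuotientAddGroup.eq_zero_iff _).2 (hinv l hl r)
  set actQ : R → (L ⧸ Λ) →+ (L ⧸ Λ) := fun r =>
    QuotientAddGroup.lift Λ
      (AddMonoidHom.mk' (fun l => (QuotientAddGroup.mk (lsmul r (rsmul l r)) : L ⧸ Λ))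
        (fun l l' => by rw [rsmul_add, lsmul_add, QuotientAddGroup.mk_add]))
      (actHom_ker r) with hactQ
  have actQ_mk : ∀ r l, actQ r (QuotientAddGroup.mk l)
      = QuotientAddGroup.mk (lsmul r (rsmul l r)) := fun r l => rfl
  have trQ_mk : ∀ l, trQ (QuotientAddGroup.mk l) = l + bar l := fun l => rfl
  refine ⟨{
    lsmul := lsmul, rsmul := rsmul,
    lsmul_add := lsmul_add, add_lsmul := add_lsmul, mul_lsmul := mul_lsmul,
    one_lsmul := one_lsmul, rsmul_add := rsmul_add,
    rsmul_add_right := rsmul_add_right, rsmul_mul := rsmul_mul,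
    rsmul_one := rsmul_one, lsmul_rsmul := lsmul_rsmul,
    bar := bar, bar_add := bar_add, bar_bar := bar_bar, bar_smul := bar_smul,
    act := fun a r => actQ r a,
    act_one := ?_, act_mul := ?_,
    phi := QuotientAddGroup.mk,
    phi_add := fun l l' => rfl,
    tr := trQ, tr_add := map_add trQ,
    phi_conj := fun r l => rfl,
    tr_act := ?_, tr_phi := fun l => rfl,
    bar_tr := ?_, phi_bar := ?_, act_add := ?_ },
    rfl, rfl, rfl, rfl, trQ_mk, fun a => QuotientAddGroup.induction_on a fun l => ⟨l, rfl⟩⟩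
  · intro a
    refine QuotientAddGroup.induction_on a fun l => ?_
    rw [actQ_mk, rsmul_one, one_lsmul]
  · intro a r r'
    refine QuotientAddGroup.induction_on a fun l => ?_
    rw [actQ_mk, actQ_mk, actQ_mk]
    simp only [mul_lsmul, rsmul_mul, lsmul_rsmul]
  · intro a r
    refine QuotientAddGroup.induction_on a fun l => ?_
    rw [actQ_mk, trQ_mk, trQ_mk]
    have hb : bar (lsmul r (rsmul l r)) = lsmul r (rsmul (bar l) r) := bar_smul r l r
    rw [hb, rsmul_add, lsmul_add]
  · intro a
    refine QuotientAddGroup.induction_on a fun l => ?_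
    rw [trQ_mk, bar_add, bar_bar]; abel
  · intro l
    refine (QuotientAddGroup.eq).2 ?_
    simpa [sub_eq_neg_add] using hmin l
  · intro a r r'
    refine QuotientAddGroup.induction_on a fun l => ?_
    rw [actQ_mk, actQ_mk, actQ_mk, trQ_mk]
    have key : (QuotientAddGroup.mk (lsmul r' (rsmul l r)) : L ⧸ Λ)
        = QuotientAddGroup.mk (lsmul r (rsmul (bar l) r')) := by
      refine (QuotientAddGroup.eq).2 ?_
      have hb : bar (lsmul r (rsmul (bar l) r')) = lsmul r' (rsmul l r) := by
        rw [bar_smul, bar_bar]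
      have h2 := hmin (lsmul r (rsmul (bar l) r'))
      rw [hb] at h2
      simpa [sub_eq_neg_add] using h2
    simp only [rsmul_add_right, lsmul_add, add_lsmul, rsmul_add, QuotientAddGroup.mk_add, key]
    abel
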